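/- Let G be a generic symmetric cost-sharing game with n players whose delay functions are of the form d_r(x) = a_r/x + b_r with a_r, b_r ≥ 0. Then the k-Lookahead Price of Anarchy of G is nonincreasing in k: for every k with 2 ≤ k ≤ n, k-LPoA(G) ≤ (k−1)-LPoA(G). -/
import Mathlib


/-- A congestion game with `n` players on a finite resource type `R`:
each player has a finite set of actions (each action a set of resources),
and each resource has a delay function `ℕ → ℝ`. -/
structure CGame (R : Type) [DecidableEq R] [Fintype R] (n : ℕ) where
  actions : Fin n → Finset (Finset R)
  delay : R → ℕ → ℝ

namespace CGame

variable {R : Type} [DecidableEq R] [Fintype R] {n : ℕ}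

/-- The congestion `x(A)_r`: number of players using resource `r` in profile `A`. -/
def congestion (_G : CGame R n) (A : Fin n → Finset R) (r : R) : ℕ :=
  (Finset.univ.filter fun i => r ∈ A i).card

/-- The cost of player `i` in profile `A`. -/
def cost (G : CGame R n) (A : Fin n → Finset R) (i : Fin n) : ℝ :=
  ∑ r ∈ A i, G.delay r (G.congestion A r)

/-- `A` is an outcome: each player plays one of his actions. -/
def IsOutcome (G : CGame R n) (A : Fin n → Finset R) : Prop :=
  ∀ i, A i ∈ G.actions i

/-- `A` is a (pure) Nash equilibrium. -/
def IsNash (G : CGame R n) (A : Fin n → Finset R) : Prop :=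
  G.IsOutcome A ∧ ∀ i, ∀ B ∈ G.actions i, G.cost A i ≤ G.cost (Function.update A i B) i

/-- The subgame induced by the first player playing `a`. -/
def subgame (G : CGame R (n + 1)) (a : Finset R) : CGame R n where
  actions := fun i => G.actions i.succ
  delay := fun r y => G.delay r (y + if r ∈ a then 1 else 0)

/-- The subgame induced by the first `m` players playing `P`. -/
def subgameMany {m k : ℕ} (G : CGame R (m + k)) (P : Fin m → Finset R) : CGame R k where
  actions := fun i => G.actions (Fin.natAdd m i)
  delay := fun r y => G.delay r (y + (Finset.univ.filter fun i : Fin m => r ∈ P i).card)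

/-- `G^k`: the game on the first `min k n` players. -/
def truncate (G : CGame R n) (k : ℕ) : CGame R (min k n) where
  actions := fun i => G.actions (Fin.castLE (min_le_right k n) i)
  delay := G.delay

/-- The game reordered so that the player in position `i` is player `σ i`. -/
def reorder (G : CGame R n) (σ : Equiv.Perm (Fin n)) : CGame R n where
  actions := fun i => G.actions (σ i)
  delay := G.delay

/-- Subgame-perfect outcomes with respect to the order `1, …, n`. -/
def IsSPO : {n : ℕ} → CGame R n → (Fin n → Finset R) → Prop
  | 0, _, _ => True
  | _ + 1, G, A =>
      A 0 ∈ G.actions 0 ∧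
      ∃ f : Finset R → (Fin _ → Finset R),
        (∀ a ∈ G.actions 0, IsSPO (G.subgame a) (f a)) ∧
        f (A 0) = Fin.tail A ∧
        ∀ a ∈ G.actions 0,
          G.cost (Fin.cons (A 0) (f (A 0))) 0 ≤ G.cost (Fin.cons a (f a)) 0

/-- `k`-lookahead outcomes with respect to the order `1, …, n`. -/
def IsKLA (k : ℕ) : {n : ℕ} → CGame R n → (Fin n → Finset R) → Prop
  | 0, _, _ => True
  | n + 1, G, A =>
      (∃ (hk : 0 < min k (n + 1)) (B : Fin (min k (n + 1)) → Finset R),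
          IsSPO (G.truncate k) B ∧ B ⟨0, hk⟩ = A 0) ∧
      IsKLA k (G.subgame (A 0)) (Fin.tail A)

/-- `A` is a subgame-perfect outcome of `G` with respect to some order of the players. -/
def IsSPOutcome (G : CGame R n) (A : Fin n → Finset R) : Prop :=
  ∃ σ : Equiv.Perm (Fin n), IsSPO (G.reorder σ) (A ∘ σ)

/-- `A` is a `k`-lookahead outcome of `G` with respect to some order of the players. -/
def IsKLO (k : ℕ) (G : CGame R n) (A : Fin n → Finset R) : Prop :=
  ∃ σ : Equiv.Perm (Fin n), IsKLA k (G.reorder σ) (A ∘ σ)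

/-- The cost of player `i` when only the players in `s` play (profile restricted to `s`). -/
def costOn (G : CGame R n) (s : Finset (Fin n)) (A : Fin n → Finset R) (i : Fin n) : ℝ :=
  ∑ r ∈ A i, G.delay r ((s.filter fun j => r ∈ A j).card)

/-- `G` is generic: in every restriction of the game to a subset of the players,
a player's cost changes whenever his own action changes. -/
def Generic (G : CGame R n) : Prop :=
  ∀ s : Finset (Fin n), ∀ A B : Fin n → Finset R,
    (∀ i ∈ s, A i ∈ G.actions i) → (∀ i ∈ s, B i ∈ G.actions i) →
    ∀ j ∈ s, A j ≠ B j → G.costOn s A j ≠ G.costOn s B j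

/-- Utilitarian social cost. -/
def SC (G : CGame R n) (A : Fin n → Finset R) : ℝ :=
  ∑ i, G.cost A i

/-- Minimum social cost over all outcomes. -/
noncomputable def optSC (G : CGame R n) : ℝ :=
  sInf {y | ∃ A, G.IsOutcome A ∧ y = G.SC A}

/-- The `k`-Lookahead Price of Anarchy. -/
noncomputable def kLPoA (G : CGame R n) (k : ℕ) : ℝ :=
  sSup {y | ∃ A, IsKLO k G A ∧ y = G.SC A / G.optSC}

/-- The Price of Anarchy. -/
noncomputable def PoA (G : CGame R n) : ℝ :=
  sSup {y | ∃ A, G.IsNash A ∧ y = G.SC A / G.optSC}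

/-- Opportunity cost `O_A` of an outcome `A` in a symmetric game with action set `𝒜`. -/
noncomputable def oppCost (G : CGame R n) (𝒜 : Finset (Finset R)) (A : Fin n → Finset R) : ℝ :=
  sInf {y | ∃ P ∈ 𝒜, y = ∑ r ∈ P, G.delay r (G.congestion A r + 1)}

/-- Worst cost (egalitarian social cost) `W_A` of an outcome `A`. -/
noncomputable def worstCost (G : CGame R n) (A : Fin n → Finset R) : ℝ :=
  sSup {y | ∃ i, y = G.cost A i}

/-- Rosenthal's potential function. -/
def potential (G : CGame R n) (A : Fin n → Finset R) : ℝ :=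
  ∑ r : R, ∑ i ∈ Finset.Icc 1 (G.congestion A r), G.delay r i

end CGame


set_option linter.unusedSectionVars false

namespace KLPoAAux
open Finset
variable {R : Type} [DecidableEq R] [Fintype R]

section
variable (𝒜 : Finset (Finset R)) (d : R → ℕ → ℝ)

/-- The symmetric game with offsets `c` and `m` players. -/
def ofs (c : R → ℕ) (m : ℕ) : CGame R m := ⟨fun _ => 𝒜, fun r y => d r (y + c r)⟩

/-- cost of an action `P` when shared by `t` players on top of offsets `c`. -/
def val (c : R → ℕ) (t : ℕ) (P : Finset R) : ℝ := ∑ r ∈ P, d r (c r + t)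

variable (h𝒜 : 𝒜.Nonempty)

/-- the `val`-minimizer. -/
noncomputable def Pmin (c : R → ℕ) (t : ℕ) : Finset R :=
  (Finset.exists_min_image 𝒜 (val d c t) h𝒜).choose

lemma Pmin_mem (c : R → ℕ) (t : ℕ) : Pmin 𝒜 d h𝒜 c t ∈ 𝒜 :=
  (Finset.exists_min_image 𝒜 (val d c t) h𝒜).choose_spec.1

lemma Pmin_min (c : R → ℕ) (t : ℕ) {Q : Finset R} (hQ : Q ∈ 𝒜) :
    val d c t (Pmin 𝒜 d h𝒜 c t) ≤ val d c t Q :=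
  (Finset.exists_min_image 𝒜 (val d c t) h𝒜).choose_spec.2 Q hQ

/-- offsets `c` are realizable by at most `n - t` players. -/
def Adm (n : ℕ) (c : R → ℕ) (t : ℕ) : Prop :=
  ∃ s : Finset (Fin n), ∃ g : Fin n → Finset R,
    (∀ i ∈ s, g i ∈ 𝒜) ∧ s.card + t ≤ n ∧ ∀ r, c r = (s.filter fun i => r ∈ g i).card

lemma Adm_zero {n t : ℕ} (P : Finset R) (ht : t ≤ n) : Adm 𝒜 n (fun _ => 0) t := by
  refine ⟨∅, fun _ => P, by simp, by simpa using ht, by simp⟩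

/-- bump the offsets by one player playing `a`. -/
lemma Adm_succ {n : ℕ} {c : R → ℕ} {t : ℕ} {a : Finset R} (ha : a ∈ 𝒜)
    (h : Adm 𝒜 n c (t + 1)) :
    Adm 𝒜 n (fun r => c r + if r ∈ a then 1 else 0) t := by
  obtain ⟨s, g, hg, hcard, hc⟩ := h
  have hslt : s.card < n := by omega
  have hsne : s ≠ Finset.univ := by
    intro hs
    rw [hs, Finset.card_univ, Fintype.card_fin] at hslt
    omega
  obtain ⟨x, -, hxs⟩ := Finset.exists_of_ssubset (Finset.ssubset_univ_iff.2 hsne)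
  refine ⟨insert x s, Function.update g x a, ?_, ?_, ?_⟩
  · intro i hi
    by_cases hix : i = x
    · subst hix; rw [Function.update_self]; exact ha
    · rw [Function.update_of_ne hix]
      refine hg i ?_
      rcases Finset.mem_insert.1 hi with h | h
      · exact absurd h hix
      · exact h
  · rw [Finset.card_insert_of_notMem hxs]; omega
  · intro r
    have hfil : s.filter (fun i => r ∈ Function.update g x a i)
        = s.filter (fun i => r ∈ g i) := by
      apply Finset.filter_congr
      intro i hi
      rw [Function.update_of_ne (by rintro rfl; exact hxs hi)]
    rw [Finset.filter_insert]
    by_cases hr : r ∈ a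
    · rw [if_pos (show r ∈ Function.update g x a x by rw [Function.update_self]; exact hr),
        Finset.card_insert_of_notMem (fun hx => hxs (Finset.mem_of_mem_filter _ hx)), hfil]
      simp [hr, hc r]
    · rw [if_neg (show ¬ r ∈ Function.update g x a x by rw [Function.update_self]; exact hr), hfil]
      simp [hr, hc r]

end
end KLPoAAux

namespace KLPoAAux
open Finset
section
variable {R : Type} [DecidableEq R] [Fintype R]
variable {𝒜 : Finset (Finset R)} {d : R → ℕ → ℝ} {n : ℕ}

lemma costOn_aux {s u : Finset (Fin n)} (hdisj : ∀ i ∈ u, i ∉ s)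
    {t : ℕ} (hu : u.card = t) (g : Fin n → Finset R) {c : R → ℕ}
    (hc : ∀ r, c r = (s.filter fun i => r ∈ g i).card)
    (P : Finset R) {j0 : Fin n} (hj0 : j0 ∈ u) :
    CGame.costOn (⟨fun _ => 𝒜, d⟩ : CGame R n) (s ∪ u)
      (fun i => if i ∈ u then P else g i) j0 = val d c t P := by
  show ∑ r ∈ (if j0 ∈ u then P else g j0), d r _ = _
  rw [if_pos hj0]
  unfold val
  refine Finset.sum_congr rfl fun r hr => ?_
  congr 1
  have h1 : (s.filter fun i => r ∈ (if i ∈ u then P else g i)) = s.filter fun i => r ∈ g i := by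
    apply Finset.filter_congr
    intro i hi
    rw [if_neg (fun h => (hdisj i h) hi)]
  have h2 : (u.filter fun i => r ∈ (if i ∈ u then P else g i)) = u := by
    apply Finset.filter_true_of_mem
    intro i hi
    rw [if_pos hi]
    exact hr
  have hd : Disjoint s u := Finset.disjoint_left.2 fun a ha hb => (hdisj a hb) ha
  rw [Finset.filter_union, Finset.card_union_of_disjoint
      (Finset.disjoint_filter_filter hd), h1, h2, hc r, hu]

lemma gen_ne (hgen : CGame.Generic (⟨fun _ => 𝒜, d⟩ : CGame R n)) {c : R → ℕ} {t : ℕ}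
    (hAdm : Adm 𝒜 n c t) (ht : 1 ≤ t) {P Q : Finset R} (hP : P ∈ 𝒜) (hQ : Q ∈ 𝒜)
    (hPQ : P ≠ Q) : val d c t P ≠ val d c t Q := by
  obtain ⟨s, g, hg, hcard, hc⟩ := hAdm
  have hle : t ≤ sᶜ.card := by
    rw [Finset.card_compl]
    simp only [Fintype.card_fin]
    omega
  obtain ⟨u, hus, hucard⟩ := Finset.exists_subset_card_eq hle
  have hdisj : ∀ i ∈ u, i ∉ s := fun i hi => by
    simpa [Finset.mem_compl] using hus hi
  have hune : u.Nonempty := by rw [← Finset.card_pos, hucard]; omega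
  obtain ⟨j0, hj0⟩ := hune
  have hA := costOn_aux (𝒜 := 𝒜) (d := d) hdisj hucard g hc P hj0
  have hB := costOn_aux (𝒜 := 𝒜) (d := d) hdisj hucard g hc Q hj0
  rw [← hA, ← hB]
  refine hgen (s ∪ u) _ _ ?_ ?_ j0 (Finset.mem_union_right _ hj0) ?_
  · intro i hi
    show (if i ∈ u then P else g i) ∈ 𝒜
    rcases Finset.mem_union.1 hi with h | h
    · rw [if_neg (fun h' => (hdisj i h') h)]; exact hg i h
    · rw [if_pos h]; exact hP
  · intro i hi
    show (if i ∈ u then Q else g i) ∈ 𝒜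
    rcases Finset.mem_union.1 hi with h | h
    · rw [if_neg (fun h' => (hdisj i h') h)]; exact hg i h
    · rw [if_pos h]; exact hQ
  · show (if j0 ∈ u then P else g j0) ≠ (if j0 ∈ u then Q else g j0)
    rw [if_pos hj0, if_pos hj0]
    exact hPQ

lemma strict_min (hgen : CGame.Generic (⟨fun _ => 𝒜, d⟩ : CGame R n)) (h𝒜 : 𝒜.Nonempty)
    {c : R → ℕ} {t : ℕ} (hAdm : Adm 𝒜 n c t) (ht : 1 ≤ t)
    {Q : Finset R} (hQ : Q ∈ 𝒜) (hne : Q ≠ Pmin 𝒜 d h𝒜 c t) :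
    val d c t (Pmin 𝒜 d h𝒜 c t) < val d c t Q :=
  lt_of_le_of_ne (Pmin_min 𝒜 d h𝒜 c t hQ)
    (gen_ne hgen hAdm ht (Pmin_mem 𝒜 d h𝒜 c t) hQ (Ne.symm hne))

end
end KLPoAAux

namespace KLPoAAux
open Finset
section
variable {R : Type} [DecidableEq R] [Fintype R]
variable (𝒜 : Finset (Finset R)) (d : R → ℕ → ℝ)

lemma subgame_ofs (c : R → ℕ) (M : ℕ) (a : Finset R) :
    (ofs 𝒜 d c (M + 1)).subgame a
      = ofs 𝒜 d (fun r => c r + if r ∈ a then 1 else 0) M := by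
  unfold ofs CGame.subgame
  simp only [CGame.mk.injEq]
  refine ⟨trivial, ?_⟩
  funext r y
  congr 1
  by_cases h : r ∈ a <;> simp [h] <;> omega

lemma congestion_cons (c : R → ℕ) (M : ℕ) (p q : Finset R) (r : R) :
    (ofs 𝒜 d c (M + 1)).congestion (Fin.cons p (fun _ => q)) r
      = (if r ∈ p then 1 else 0) + M * (if r ∈ q then 1 else 0) := by
  unfold CGame.congestion
  rw [Finset.card_filter, Fin.sum_univ_succ]
  simp [Fin.cons_zero, Fin.cons_succ, Finset.sum_const, Finset.card_univ, mul_comm]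

lemma cost_cons (c : R → ℕ) (M : ℕ) (p q : Finset R) :
    (ofs 𝒜 d c (M + 1)).cost (Fin.cons p (fun _ => q)) 0
      = ∑ r ∈ p, d r ((1 + M * (if r ∈ q then 1 else 0)) + c r) := by
  unfold CGame.cost
  simp only [Fin.cons_zero]
  refine Finset.sum_congr rfl fun r hr => ?_
  show d r ((ofs 𝒜 d c (M + 1)).congestion (Fin.cons p (fun _ => q)) r + c r) = _
  rw [congestion_cons, if_pos hr]

lemma cost_cons_same (c : R → ℕ) (M : ℕ) (p : Finset R) :
    (ofs 𝒜 d c (M + 1)).cost (Fin.cons p (fun _ => p)) 0 = val d c (M + 1) p := by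
  rw [cost_cons]
  refine Finset.sum_congr rfl fun r hr => ?_
  rw [if_pos hr]
  congr 1
  omega

lemma cost_cons_ge (hanti : ∀ r, Antitone (d r)) (c : R → ℕ) (M : ℕ) (p q : Finset R) :
    val d c (M + 1) p ≤ (ofs 𝒜 d c (M + 1)).cost (Fin.cons p (fun _ => q)) 0 := by
  rw [cost_cons]
  refine Finset.sum_le_sum fun r hr => ?_
  apply hanti r
  by_cases h : r ∈ q <;> simp [h] <;> omega

end
end KLPoAAux

namespace KLPoAAux
open Finset
section
variable {R : Type} [DecidableEq R] [Fintype R]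
variable {𝒜 : Finset (Finset R)} {d : R → ℕ → ℝ} {n : ℕ}

lemma spo_herd (hgen : CGame.Generic (⟨fun _ => 𝒜, d⟩ : CGame R n)) (h𝒜 : 𝒜.Nonempty)
    (hanti : ∀ r, Antitone (d r)) :
    ∀ (m : ℕ) (c : R → ℕ), Adm 𝒜 n c (m + 1) →
      ∀ A : Fin (m + 1) → Finset R,
        CGame.IsSPO (ofs 𝒜 d c (m + 1)) A ↔ A = fun _ => Pmin 𝒜 d h𝒜 c (m + 1) := by
  intro m
  induction m with
  | zero =>
    intro c hAdm A
    constructor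
    · rintro ⟨hA0, f, -, -, hopt⟩
      have hval : ∀ a : Finset R,
          (ofs 𝒜 d c 1).cost (Fin.cons a (f a)) 0 = val d c 1 a := fun a => by
        rw [Subsingleton.elim (f a) (fun _ => a)]
        exact cost_cons_same 𝒜 d c 0 a
      have hA0eq : A 0 = Pmin 𝒜 d h𝒜 c 1 := by
        by_contra hne
        have h1 := hopt (Pmin 𝒜 d h𝒜 c 1) (Pmin_mem 𝒜 d h𝒜 c 1)
        rw [hval, hval] at h1
        exact absurd h1 (not_le.2 (strict_min hgen h𝒜 hAdm le_rfl hA0 hne))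
      funext i
      have : i = 0 := Fin.ext (by omega)
      rw [this]
      exact hA0eq
    · rintro rfl
      refine ⟨Pmin_mem 𝒜 d h𝒜 c 1, fun _ => (fun x => x.elim0), fun a _ => trivial,
        Subsingleton.elim _ _, fun a ha => ?_⟩
      have h1 : (ofs 𝒜 d c 1).cost
          (Fin.cons (Pmin 𝒜 d h𝒜 c 1) (fun _ : Fin 0 => Pmin 𝒜 d h𝒜 c 1)) 0
            = val d c 1 (Pmin 𝒜 d h𝒜 c 1) := cost_cons_same 𝒜 d c 0 _
      have h2 : (ofs 𝒜 d c 1).cost (Fin.cons a (fun _ : Fin 0 => a)) 0 = val d c 1 a :=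
        cost_cons_same 𝒜 d c 0 a
      calc (ofs 𝒜 d c 1).cost
            (Fin.cons ((fun _ : Fin 1 => Pmin 𝒜 d h𝒜 c 1) 0) (fun x : Fin 0 => x.elim0)) 0
          = val d c 1 (Pmin 𝒜 d h𝒜 c 1) := by
            rw [Subsingleton.elim (fun x : Fin 0 => x.elim0)
              (fun _ : Fin 0 => Pmin 𝒜 d h𝒜 c 1)]
            exact h1
        _ ≤ val d c 1 a := Pmin_min 𝒜 d h𝒜 c 1 ha
        _ = (ofs 𝒜 d c 1).cost (Fin.cons a (fun x : Fin 0 => x.elim0)) 0 := by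
            rw [Subsingleton.elim (fun x : Fin 0 => x.elim0) (fun _ : Fin 0 => a)]
            exact h2.symm
  | succ m IH =>
    intro c hAdm A
    set P' := Pmin 𝒜 d h𝒜 c (m + 1 + 1) with hP'
    have hP'mem : P' ∈ 𝒜 := Pmin_mem 𝒜 d h𝒜 c (m + 1 + 1)
    have claimY : Pmin 𝒜 d h𝒜 (fun r => c r + if r ∈ P' then 1 else 0) (m + 1) = P' := by
      by_contra hne
      set c' := fun r => c r + if r ∈ P' then 1 else 0 with hc'
      set Q := Pmin 𝒜 d h𝒜 c' (m + 1) with hQ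
      have h1 : val d c' (m + 1) P' = val d c (m + 1 + 1) P' := by
        refine Finset.sum_congr rfl fun r hr => ?_
        congr 1
        simp only [hc', if_pos hr]
        omega
      have h2 : val d c (m + 1 + 1) Q ≤ val d c' (m + 1) Q := by
        refine Finset.sum_le_sum fun r hr => ?_
        apply hanti r
        by_cases h : r ∈ P' <;> simp [hc', h] <;> omega
      have h3 : val d c (m + 1 + 1) P' < val d c (m + 1 + 1) Q :=
        strict_min hgen h𝒜 hAdm (by omega) (Pmin_mem 𝒜 d h𝒜 c' (m + 1)) hne
      have h4 : val d c' (m + 1) Q ≤ val d c' (m + 1) P' := Pmin_min 𝒜 d h𝒜 c' (m + 1) hP'mem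
      linarith
    constructor
    · rintro ⟨hA0, f, hf, hftail, hopt⟩
      have hfa : ∀ a ∈ 𝒜, f a
          = fun _ => Pmin 𝒜 d h𝒜 (fun r => c r + if r ∈ a then 1 else 0) (m + 1) := by
        intro a ha
        have h := hf a ha
        rw [subgame_ofs] at h
        exact (IH _ (Adm_succ (𝒜 := 𝒜) ha hAdm) (f a)).1 h
      have key : ∀ a ∈ 𝒜,
          val d c (m + 1 + 1) a ≤ (ofs 𝒜 d c (m + 1 + 1)).cost (Fin.cons a (f a)) 0 := by
        intro a ha
        rw [hfa a ha]
        exact cost_cons_ge 𝒜 d hanti c (m + 1) a _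
      have hcostP' : (ofs 𝒜 d c (m + 1 + 1)).cost (Fin.cons P' (f P')) 0
          = val d c (m + 1 + 1) P' := by
        rw [hfa P' hP'mem]
        simp only [claimY]
        exact cost_cons_same 𝒜 d c (m + 1) P'
      have hA0eq : A 0 = P' := by
        by_contra hne
        have h5 := hopt P' hP'mem
        rw [hcostP'] at h5
        have h6 := (key (A 0) hA0).trans h5
        exact absurd h6 (not_le.2 (strict_min hgen h𝒜 hAdm (by omega) hA0 hne))
      have htail : Fin.tail A = fun _ => P' := by
        rw [← hftail, hfa (A 0) hA0, hA0eq]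
        simp only [claimY]
      funext i
      refine Fin.cases ?_ (fun j => ?_) i
      · exact hA0eq
      · calc A j.succ = Fin.tail A j := rfl
          _ = P' := by rw [htail]
    · rintro rfl
      refine ⟨hP'mem,
        fun a => fun _ => Pmin 𝒜 d h𝒜 (fun r => c r + if r ∈ a then 1 else 0) (m + 1),
        fun a ha => ?_, ?_, fun a ha => ?_⟩
      · rw [subgame_ofs]
        exact (IH _ (Adm_succ (𝒜 := 𝒜) (show a ∈ 𝒜 from ha) hAdm) _).2 rfl
      · show (fun _ : Fin (m + 1) =>
            Pmin 𝒜 d h𝒜 (fun r => c r + if r ∈ P' then 1 else 0) (m + 1))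
          = Fin.tail (fun _ : Fin (m + 1 + 1) => P')
        simp only [claimY]
        rfl
      · have e1 : (ofs 𝒜 d c (m + 1 + 1)).cost
            (Fin.cons P' (fun _ : Fin (m + 1) =>
              Pmin 𝒜 d h𝒜 (fun r => c r + if r ∈ P' then 1 else 0) (m + 1))) 0
              = val d c (m + 1 + 1) P' := by
          simp only [claimY]
          exact cost_cons_same 𝒜 d c (m + 1) P'
        calc (ofs 𝒜 d c (m + 1 + 1)).cost
              (Fin.cons ((fun _ : Fin (m + 1 + 1) => P') 0)
                (fun _ : Fin (m + 1) =>
                  Pmin 𝒜 d h𝒜 (fun r => c r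
                    + if r ∈ (fun _ : Fin (m + 1 + 1) => P') 0 then 1 else 0) (m + 1))) 0
            = val d c (m + 1 + 1) P' := e1
          _ ≤ val d c (m + 1 + 1) a := Pmin_min 𝒜 d h𝒜 c (m + 1 + 1) ha
          _ ≤ (ofs 𝒜 d c (m + 1 + 1)).cost (Fin.cons a (fun _ : Fin (m + 1) =>
              Pmin 𝒜 d h𝒜 (fun r => c r + if r ∈ a then 1 else 0) (m + 1))) 0 :=
            cost_cons_ge 𝒜 d hanti c (m + 1) a _

/-- version for any positive number of players -/
lemma spo_herd' (hgen : CGame.Generic (⟨fun _ => 𝒜, d⟩ : CGame R n)) (h𝒜 : 𝒜.Nonempty)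
    (hanti : ∀ r, Antitone (d r)) (m : ℕ) (hm : 1 ≤ m) (c : R → ℕ) (hAdm : Adm 𝒜 n c m)
    (A : Fin m → Finset R) :
    CGame.IsSPO (ofs 𝒜 d c m) A ↔ A = fun _ => Pmin 𝒜 d h𝒜 c m := by
  obtain ⟨m', rfl⟩ : ∃ m', m = m' + 1 := ⟨m - 1, by omega⟩
  exact spo_herd hgen h𝒜 hanti m' c hAdm A

end
end KLPoAAux

namespace KLPoAAux
open Finset
section
variable {R : Type} [DecidableEq R] [Fintype R]

/-- the herd target for lookahead `k` in the `n`-player game. -/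
noncomputable def PkD (𝒜 : Finset (Finset R)) (d : R → ℕ → ℝ) (h𝒜 : 𝒜.Nonempty)
    (n k : ℕ) : Finset R :=
  Pmin 𝒜 d h𝒜 (fun _ => 0) (min k n)

/-- offsets after `i` players have herded. -/
noncomputable def cPD (𝒜 : Finset (Finset R)) (d : R → ℕ → ℝ) (h𝒜 : 𝒜.Nonempty)
    (n k i : ℕ) : R → ℕ :=
  fun r => i * (if r ∈ PkD 𝒜 d h𝒜 n k then 1 else 0)

variable {𝒜 : Finset (Finset R)} {d : R → ℕ → ℝ} {n : ℕ}

lemma PkD_mem (h𝒜 : 𝒜.Nonempty) (k : ℕ) : PkD 𝒜 d h𝒜 n k ∈ 𝒜 :=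
  Pmin_mem 𝒜 d h𝒜 _ _

lemma Adm_cP (h𝒜 : 𝒜.Nonempty) (k i t : ℕ) (hit : i + t ≤ n) :
    Adm 𝒜 n (cPD 𝒜 d h𝒜 n k i) t := by
  obtain ⟨s, -, hcard⟩ := Finset.exists_subset_card_eq
    (show i ≤ (Finset.univ : Finset (Fin n)).card by
      rw [Finset.card_univ, Fintype.card_fin]; omega)
  refine ⟨s, fun _ => PkD 𝒜 d h𝒜 n k, fun _ _ => PkD_mem h𝒜 k, by omega, fun r => ?_⟩
  by_cases h : r ∈ PkD 𝒜 d h𝒜 n k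
  · rw [Finset.filter_true_of_mem (fun i _ => h)]
    simp [cPD, h, hcard]
  · rw [Finset.filter_false_of_mem (fun i _ => h)]
    simp [cPD, h]

lemma Pmin_cP (hgen : CGame.Generic (⟨fun _ => 𝒜, d⟩ : CGame R n)) (h𝒜 : 𝒜.Nonempty)
    (hanti : ∀ r, Antitone (d r)) (k i M : ℕ) (hk : 1 ≤ k) (hM : 1 ≤ M)
    (hiM : i + M = n) :
    Pmin 𝒜 d h𝒜 (cPD 𝒜 d h𝒜 n k i) (min k M) = PkD 𝒜 d h𝒜 n k := by
  have hPk_eq : PkD 𝒜 d h𝒜 n k = Pmin 𝒜 d h𝒜 (fun _ => 0) (min k n) := rfl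
  set Pk := PkD 𝒜 d h𝒜 n k with hPkdef
  set t := min k M with ht
  set t0 := min k n with ht0
  have hPkmem : Pk ∈ 𝒜 := PkD_mem h𝒜 k
  by_contra hne
  set Q := Pmin 𝒜 d h𝒜 (cPD 𝒜 d h𝒜 n k i) t with hQdef
  have hQmem : Q ∈ 𝒜 := Pmin_mem 𝒜 d h𝒜 _ _
  have hQne : Q ≠ Pk := hne
  -- base strict inequality at zero offsets and horizon t0
  have hval0 : ∀ X : Finset R, val d (fun _ => 0) t0 X = ∑ r ∈ X, d r t0 := fun X =>
    Finset.sum_congr rfl fun r _ => by norm_num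
  have hbase0 : val d (fun _ => 0) t0 Pk < val d (fun _ => 0) t0 Q := by
    rw [hPk_eq]
    exact strict_min hgen h𝒜 (Adm_zero 𝒜 h𝒜.choose (by omega)) (by omega) hQmem
      (by rw [← hPk_eq]; exact hQne)
  have hsplitbase : (∑ r ∈ Pk \ Q, d r t0) < ∑ r ∈ Q \ Pk, d r t0 := by
    rw [hval0, hval0] at hbase0
    rw [← Finset.sum_inter_add_sum_sdiff Pk Q (fun r => d r t0),
      ← Finset.sum_inter_add_sum_sdiff Q Pk (fun r => d r t0),
      Finset.inter_comm Q Pk] at hbase0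
    linarith
  -- computing the two values at offsets `cPD i` and horizon `t`
  have ePk : val d (cPD 𝒜 d h𝒜 n k i) t Pk
      = (∑ r ∈ Pk ∩ Q, d r (i + t)) + ∑ r ∈ Pk \ Q, d r (i + t) := by
    have : val d (cPD 𝒜 d h𝒜 n k i) t Pk = ∑ r ∈ Pk, d r (i + t) := by
      refine Finset.sum_congr rfl fun r hr => ?_
      congr 1
      simp [cPD, hr, ← hPkdef]
    rw [this, ← Finset.sum_inter_add_sum_sdiff Pk Q (fun r => d r (i + t))]
  have eQ : val d (cPD 𝒜 d h𝒜 n k i) t Q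
      = (∑ r ∈ Pk ∩ Q, d r (i + t)) + ∑ r ∈ Q \ Pk, d r t := by
    unfold val
    rw [← Finset.sum_inter_add_sum_sdiff Q Pk
      (fun r => d r (cPD 𝒜 d h𝒜 n k i r + t)), Finset.inter_comm Q Pk]
    congr 1
    · refine Finset.sum_congr rfl fun r hr => ?_
      congr 1
      have : r ∈ Pk := (Finset.mem_inter.1 hr).1
      simp [cPD, this, ← hPkdef]
    · refine Finset.sum_congr rfl fun r hr => ?_
      congr 1
      have : r ∉ Pk := (Finset.mem_sdiff.1 hr).2
      simp [cPD, this, ← hPkdef]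
  have c1 : (∑ r ∈ Pk \ Q, d r (i + t)) ≤ ∑ r ∈ Pk \ Q, d r t0 :=
    Finset.sum_le_sum fun r _ => hanti r (by omega)
  have c2 : (∑ r ∈ Q \ Pk, d r t0) ≤ ∑ r ∈ Q \ Pk, d r t :=
    Finset.sum_le_sum fun r _ => hanti r (by omega)
  have hlt : val d (cPD 𝒜 d h𝒜 n k i) t Pk < val d (cPD 𝒜 d h𝒜 n k i) t Q := by
    rw [ePk, eQ]
    linarith
  exact absurd (Pmin_min 𝒜 d h𝒜 (cPD 𝒜 d h𝒜 n k i) t hPkmem) (not_le.2 hlt)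

lemma kla_herd (hgen : CGame.Generic (⟨fun _ => 𝒜, d⟩ : CGame R n)) (h𝒜 : 𝒜.Nonempty)
    (hanti : ∀ r, Antitone (d r)) (k : ℕ) (hk : 1 ≤ k) :
    ∀ (m i : ℕ), i + m = n → ∀ A : Fin m → Finset R,
      CGame.IsKLA k (ofs 𝒜 d (cPD 𝒜 d h𝒜 n k i) m) A ↔ A = fun _ => PkD 𝒜 d h𝒜 n k := by
  intro m
  induction m with
  | zero =>
    intro i hi A
    constructor
    · intro _
      funext x
      exact x.elim0
    · intro _
      trivial
  | succ m IH =>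
    intro i hi A
    have h0t : 0 < min k (m + 1) := by omega
    have hAdm : Adm 𝒜 n (cPD 𝒜 d h𝒜 n k i) (min k (m + 1)) :=
      Adm_cP h𝒜 k i _ (by omega)
    have hspo : ∀ B : Fin (min k (m + 1)) → Finset R,
        CGame.IsSPO ((ofs 𝒜 d (cPD 𝒜 d h𝒜 n k i) (m + 1)).truncate k) B ↔
          B = fun _ => Pmin 𝒜 d h𝒜 (cPD 𝒜 d h𝒜 n k i) (min k (m + 1)) := by
      intro B
      show CGame.IsSPO (ofs 𝒜 d (cPD 𝒜 d h𝒜 n k i) (min k (m + 1))) B ↔ _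
      exact spo_herd' hgen h𝒜 hanti _ (by omega) _ hAdm B
    have hPeq : Pmin 𝒜 d h𝒜 (cPD 𝒜 d h𝒜 n k i) (min k (m + 1)) = PkD 𝒜 d h𝒜 n k :=
      Pmin_cP hgen h𝒜 hanti k i (m + 1) hk (by omega) hi
    have hbump : (fun r => cPD 𝒜 d h𝒜 n k i r + if r ∈ PkD 𝒜 d h𝒜 n k then 1 else 0)
        = cPD 𝒜 d h𝒜 n k (i + 1) := by
      funext r
      by_cases h : r ∈ PkD 𝒜 d h𝒜 n k <;> simp [cPD, h] <;> ring
    constructor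
    · rintro ⟨⟨hk0, B, hB, hB0⟩, hrec⟩
      have hBc := (hspo B).1 hB
      have hA0 : A 0 = PkD 𝒜 d h𝒜 n k := by
        rw [← hB0, hBc]
        exact hPeq
      rw [hA0, subgame_ofs, hbump] at hrec
      have htail := (IH (i + 1) (by omega) (Fin.tail A)).1 hrec
      funext j
      refine Fin.cases ?_ (fun j' => ?_) j
      · exact hA0
      · calc A j'.succ = Fin.tail A j' := rfl
          _ = PkD 𝒜 d h𝒜 n k := by rw [htail]
    · rintro rfl
      constructor
      · refine ⟨h0t, fun _ => PkD 𝒜 d h𝒜 n k, ?_, rfl⟩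
        apply (hspo _).2
        rw [hPeq]
      · show CGame.IsKLA k
          ((ofs 𝒜 d (cPD 𝒜 d h𝒜 n k i) (m + 1)).subgame (PkD 𝒜 d h𝒜 n k))
          (fun _ : Fin m => PkD 𝒜 d h𝒜 n k)
        rw [subgame_ofs, hbump]
        exact (IH (i + 1) (by omega) _).2 rfl

end
end KLPoAAux

namespace KLPoAAux
open Finset
section
variable {R : Type} [DecidableEq R] [Fintype R]
variable {𝒜 : Finset (Finset R)} {d : R → ℕ → ℝ} {n : ℕ}

lemma val_zero (t : ℕ) (X : Finset R) : val d (fun _ => 0) t X = ∑ r ∈ X, d r t :=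
  Finset.sum_congr rfl fun r _ => by norm_num

lemma klo_iff (hgen : CGame.Generic (⟨fun _ => 𝒜, d⟩ : CGame R n)) (h𝒜 : 𝒜.Nonempty)
    (hanti : ∀ r, Antitone (d r)) (κ : ℕ) (hκ1 : 1 ≤ κ) (A : Fin n → Finset R) :
    CGame.IsKLO κ (⟨fun _ => 𝒜, d⟩ : CGame R n) A ↔ A = fun _ => PkD 𝒜 d h𝒜 n κ := by
  have hc0 : cPD 𝒜 d h𝒜 n κ 0 = fun _ => 0 := by funext r; simp [cPD]
  constructor
  · rintro ⟨σ, hσ⟩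
    have h : CGame.IsKLA κ (ofs 𝒜 d (cPD 𝒜 d h𝒜 n κ 0) n) (A ∘ σ) := by
      rw [hc0]
      exact hσ
    have hAσ := (kla_herd hgen h𝒜 hanti κ hκ1 n 0 (by omega) (A ∘ σ)).1 h
    funext x
    have h2 := congrFun hAσ (σ.symm x)
    simpa using h2
  · rintro rfl
    refine ⟨Equiv.refl _, ?_⟩
    have h := (kla_herd hgen h𝒜 hanti κ hκ1 n 0 (by omega)
      (fun _ => PkD 𝒜 d h𝒜 n κ)).2 rfl
    rw [hc0] at h
    exact h

lemma SC_const (P : Finset R) :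
    (⟨fun _ => 𝒜, d⟩ : CGame R n).SC (fun _ => P) = n * ∑ r ∈ P, d r n := by
  have hcong : ∀ r ∈ P,
      (⟨fun _ => 𝒜, d⟩ : CGame R n).congestion (fun _ => P) r = n := by
    intro r hr
    unfold CGame.congestion
    rw [Finset.filter_true_of_mem (fun i _ => hr), Finset.card_univ, Fintype.card_fin]
  have hcost : ∀ i : Fin n,
      (⟨fun _ => 𝒜, d⟩ : CGame R n).cost (fun _ => P) i = ∑ r ∈ P, d r n := by
    intro i
    unfold CGame.cost
    exact Finset.sum_congr rfl fun r hr => by rw [hcong r hr]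
  unfold CGame.SC
  rw [Finset.sum_congr rfl (fun i _ => hcost i), Finset.sum_const, Finset.card_univ,
    Fintype.card_fin, nsmul_eq_mul]

lemma optSC_nonneg (hnonneg : ∀ r m, 0 ≤ d r m) :
    0 ≤ (⟨fun _ => 𝒜, d⟩ : CGame R n).optSC := by
  apply Real.sInf_nonneg
  rintro y ⟨A, -, rfl⟩
  apply Finset.sum_nonneg
  intro i _
  apply Finset.sum_nonneg
  intro r _
  exact hnonneg r _

lemma SC_core (hgen : CGame.Generic (⟨fun _ => 𝒜, d⟩ : CGame R n)) (h𝒜 : 𝒜.Nonempty)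
    (a b : R → ℝ)
    (hform : ∀ r (x : ℕ), 1 ≤ x → d r x = a r / (x : ℝ) + b r)
    (k : ℕ) (hk2 : 2 ≤ k) (hkn : k ≤ n) :
    (∑ r ∈ PkD 𝒜 d h𝒜 n k, d r n) ≤ ∑ r ∈ PkD 𝒜 d h𝒜 n (k - 1), d r n := by
  set P1 := PkD 𝒜 d h𝒜 n k with hP1
  set P2 := PkD 𝒜 d h𝒜 n (k - 1) with hP2
  have hP1mem : P1 ∈ 𝒜 := PkD_mem h𝒜 k
  have hP2mem : P2 ∈ 𝒜 := PkD_mem h𝒜 (k - 1)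
  have hmin1 : min k n = k := min_eq_left hkn
  have hmin2 : min (k - 1) n = k - 1 := min_eq_left (by omega)
  -- minimality relations
  have h1 : (∑ r ∈ P1, d r k) ≤ ∑ r ∈ P2, d r k := by
    have := Pmin_min 𝒜 d h𝒜 (fun _ => 0) (min k n) hP2mem
    rw [show Pmin 𝒜 d h𝒜 (fun _ => 0) (min k n) = P1 from rfl, val_zero, val_zero, hmin1]
      at this
    exact this
  have h2 : (∑ r ∈ P2, d r (k - 1)) ≤ ∑ r ∈ P1, d r (k - 1) := by
    have := Pmin_min 𝒜 d h𝒜 (fun _ => 0) (min (k - 1) n) hP1mem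
    rw [show Pmin 𝒜 d h𝒜 (fun _ => 0) (min (k - 1) n) = P2 from rfl, val_zero, val_zero,
      hmin2] at this
    exact this
  -- rewrite with the explicit form
  have e : ∀ (t : ℕ), 1 ≤ t → ∀ X : Finset R,
      (∑ r ∈ X, d r t) = (∑ r ∈ X, a r) / (t : ℝ) + ∑ r ∈ X, b r := by
    intro t ht X
    rw [Finset.sum_div, ← Finset.sum_add_distrib]
    exact Finset.sum_congr rfl fun r _ => hform r t ht
  set A1 := ∑ r ∈ P1, a r
  set B1 := ∑ r ∈ P1, b r
  set A2 := ∑ r ∈ P2, a r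
  set B2 := ∑ r ∈ P2, b r
  rw [e n (by omega) P1, e n (by omega) P2]
  rw [e k (by omega) P1, e k (by omega) P2] at h1
  rw [e (k - 1) (by omega) P1, e (k - 1) (by omega) P2] at h2
  have hK1 : ((k - 1 : ℕ) : ℝ) = (k : ℝ) - 1 := by
    push_cast [Nat.cast_sub (by omega : 1 ≤ k)]
    ring
  rw [hK1] at h2
  have hK0 : (0 : ℝ) < (k : ℝ) := by
    have : (0 : ℕ) < k := by omega
    exact_mod_cast this
  have hK2 : (2 : ℝ) ≤ (k : ℝ) := by exact_mod_cast hk2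
  have hK1' : (0 : ℝ) < (k : ℝ) - 1 := by linarith
  have hN : (0 : ℝ) < (n : ℝ) := by
    have : (0 : ℕ) < n := by omega
    exact_mod_cast this
  have hKN : ((k : ℝ)) ≤ (n : ℝ) := by exact_mod_cast hkn
  have e1 : A1 - A2 ≤ (B2 - B1) * (k : ℝ) := by
    have h3 : (A1 - A2) / (k : ℝ) ≤ B2 - B1 := by
      rw [sub_div]
      linarith
    exact (div_le_iff₀ hK0).1 h3
  have e2 : A2 - A1 ≤ (B1 - B2) * ((k : ℝ) - 1) := by
    have h3 : (A2 - A1) / ((k : ℝ) - 1) ≤ B1 - B2 := by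
      rw [sub_div]
      linarith
    exact (div_le_iff₀ hK1').1 h3
  have hB : B1 ≤ B2 := by
    have hsum := add_le_add e1 e2
    have hring : (B2 - B1) * (k : ℝ) + (B1 - B2) * ((k : ℝ) - 1) = B2 - B1 := by ring
    linarith
  have e3 : A1 - A2 ≤ (B2 - B1) * (n : ℝ) :=
    e1.trans (mul_le_mul_of_nonneg_left hKN (by linarith))
  have h4 : (A1 - A2) / (n : ℝ) ≤ B2 - B1 := (div_le_iff₀ hN).2 e3
  rw [sub_div] at h4
  linarith

end
end KLPoAAux

/-- For a generic symmetric cost-sharing game whose delay functions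
have the form `d_r(x) = a_r/x + b_r` (with `a_r, b_r ≥ 0`), the `k`-Lookahead Price of
Anarchy is nonincreasing in `k`. -/
theorem kLPoA_nonincreasing {R : Type} [DecidableEq R] [Fintype R] {n : ℕ}
    (𝒜 : Finset (Finset R)) (h𝒜 : 𝒜.Nonempty) (d : R → ℕ → ℝ)
    (hanti : ∀ r, Antitone (d r))
    (hnonneg : ∀ r m, 0 ≤ d r m)
    (a b : R → ℝ) (ha : ∀ r, 0 ≤ a r) (hb : ∀ r, 0 ≤ b r)
    (hform : ∀ r (x : ℕ), 1 ≤ x → d r x = a r / (x : ℝ) + b r)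
    (hgen : CGame.Generic (⟨fun _ => 𝒜, d⟩ : CGame R n))
    (k : ℕ) (hk2 : 2 ≤ k) (hkn : k ≤ n) :
    CGame.kLPoA (⟨fun _ => 𝒜, d⟩ : CGame R n) k ≤
      CGame.kLPoA (⟨fun _ => 𝒜, d⟩ : CGame R n) (k - 1) := by
  classical
  have hval : ∀ κ, 1 ≤ κ →
      CGame.kLPoA (⟨fun _ => 𝒜, d⟩ : CGame R n) κ
        = (⟨fun _ => 𝒜, d⟩ : CGame R n).SC (fun _ => KLPoAAux.PkD 𝒜 d h𝒜 n κ)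
            / (⟨fun _ => 𝒜, d⟩ : CGame R n).optSC := by
    intro κ hκ
    have hset : {y | ∃ A, CGame.IsKLO κ (⟨fun _ => 𝒜, d⟩ : CGame R n) A ∧
        y = (⟨fun _ => 𝒜, d⟩ : CGame R n).SC A / (⟨fun _ => 𝒜, d⟩ : CGame R n).optSC}
          = {(⟨fun _ => 𝒜, d⟩ : CGame R n).SC (fun _ => KLPoAAux.PkD 𝒜 d h𝒜 n κ)
              / (⟨fun _ => 𝒜, d⟩ : CGame R n).optSC} := by
      ext y
      simp only [Set.mem_setOf_eq, Set.mem_singleton_iff]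
      constructor
      · rintro ⟨A, hA, rfl⟩
        rw [(KLPoAAux.klo_iff hgen h𝒜 hanti κ hκ A).1 hA]
      · rintro rfl
        exact ⟨_, (KLPoAAux.klo_iff hgen h𝒜 hanti κ hκ _).2 rfl, rfl⟩
    unfold CGame.kLPoA
    rw [hset, csSup_singleton]
  rw [hval k (by omega), hval (k - 1) (by omega)]
  have hSC : (⟨fun _ => 𝒜, d⟩ : CGame R n).SC (fun _ => KLPoAAux.PkD 𝒜 d h𝒜 n k)
      ≤ (⟨fun _ => 𝒜, d⟩ : CGame R n).SC (fun _ => KLPoAAux.PkD 𝒜 d h𝒜 n (k - 1)) := by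
    rw [KLPoAAux.SC_const, KLPoAAux.SC_const]
    have hcore := KLPoAAux.SC_core hgen h𝒜 a b hform k hk2 hkn
    have hn0 : (0 : ℝ) ≤ (n : ℝ) := by positivity
    exact mul_le_mul_of_nonneg_left hcore hn0
  rcases (KLPoAAux.optSC_nonneg (𝒜 := 𝒜) hnonneg).eq_or_lt with h | h
  · rw [← h]
    simp
  · exact (div_le_div_iff_of_pos_right h).2 hSC
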